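/- For density matrices ρ, σ on a finite-dimensional Hilbert space, the trace distance δ(ρ,σ) = max over 0 ≤ Υ ≤ 1 of Tr[Υ(ρ−σ)] and the fidelity F(ρ,σ) = ‖√ρ√σ‖₁ satisfy δ(ρ,σ)² + F(ρ,σ)² ≤ 1. -/

import Mathlib

open Matrix Kronecker Complex BigOperators
open scoped ComplexOrder Classical

noncomputable section

/-- primitive d-th root of unity -/
def omg (d : ℕ) : ℂ := Complex.exp (2 * Real.pi * Complex.I / d)

/-- standard basis vector |z⟩ -/
def ketZ (d : ℕ) (z : Fin d) : Fin d → ℂ := fun i => if i = z then 1 else 0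

/-- Fourier basis vector |x̃⟩ = (1/√d) Σ_z ω^{xz} |z⟩ -/
def ketX (d : ℕ) (x : Fin d) : Fin d → ℂ :=
  fun z => ((1 / Real.sqrt d : ℝ) : ℂ) * omg d ^ ((x : ℕ) * (z : ℕ))

/-- projector |z⟩⟨z| -/
def projZ (d : ℕ) (z : Fin d) : Matrix (Fin d) (Fin d) ℂ :=
  Matrix.vecMulVec (ketZ d z) (star (ketZ d z))

/-- projector |x̃⟩⟨x̃| -/
def projX (d : ℕ) (x : Fin d) : Matrix (Fin d) (Fin d) ℂ :=
  Matrix.vecMulVec (ketX d x) (star (ketX d x))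

/-- positive semidefinite square root (0 if not PSD) -/
def msqrt {n : Type*} [Fintype n] [DecidableEq n] (M : Matrix n n ℂ) : Matrix n n ℂ :=
  if h : M.PosSemidef then
    (h.1.eigenvectorUnitary : Matrix n n ℂ) *
      Matrix.diagonal (fun i => ((Real.sqrt (h.1.eigenvalues i) : ℝ) : ℂ)) *
      (star h.1.eigenvectorUnitary : Matrix n n ℂ)
  else 0

/-- trace norm ‖M‖₁ = Tr √(MᴴM) -/
def trNorm {n : Type*} [Fintype n] [DecidableEq n] (M : Matrix n n ℂ) : ℝ :=
  (msqrt (Mᴴ * M)).trace.re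

/-- fidelity F(ρ,σ) = ‖√ρ√σ‖₁ -/
def Fid {n : Type*} [Fintype n] [DecidableEq n] (ρ σ : Matrix n n ℂ) : ℝ :=
  trNorm (msqrt ρ * msqrt σ)

/-- a POVM with d outcomes -/
def IsPOVM {n : Type*} [Fintype n] [DecidableEq n] {d : ℕ} (Λ : Fin d → Matrix n n ℂ) : Prop :=
  (∀ z, (Λ z).PosSemidef) ∧ ∑ z, Λ z = 1

/-- optimal guessing probability of the measurement with rank-one elements P z on A,
given the B part of the bipartite state ψ -/
def Pguess {d : ℕ} {β : Type*} [Fintype β] [DecidableEq β]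
    (P : Fin d → Matrix (Fin d) (Fin d) ℂ) (ψ : Matrix (Fin d × β) (Fin d × β) ℂ) : ℝ :=
  sSup { r | ∃ Λ : Fin d → Matrix β β ℂ, IsPOVM Λ ∧
    r = (Matrix.trace ((∑ z, P z ⊗ₖ Λ z) * ψ)).re }

/-- trace distance δ(ρ,σ) = max_{0 ≤ Υ ≤ 1} Tr[Υ(ρ-σ)] -/
def traceDist {n : Type*} [Fintype n] [DecidableEq n] (ρ σ : Matrix n n ℂ) : ℝ :=
  sSup { r | ∃ Υ : Matrix n n ℂ, Υ.PosSemidef ∧ ((1 : Matrix n n ℂ) - Υ).PosSemidef ∧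
    r = ((Υ * (ρ - σ)).trace).re }

section AuxFvdG
variable {n : Type*} [Fintype n] [DecidableEq n]

lemma msqrt_psd {M : Matrix n n ℂ} (h : M.PosSemidef) : (msqrt M).PosSemidef := by
  rw [msqrt, dif_pos h, Matrix.star_eq_conjTranspose]
  apply Matrix.PosSemidef.mul_mul_conjTranspose_same
  apply Matrix.PosSemidef.diagonal
  intro i
  exact Complex.zero_le_real.mpr (Real.sqrt_nonneg _)

lemma msqrt_mul_self {M : Matrix n n ℂ} (h : M.PosSemidef) : msqrt M * msqrt M = M := by
  rw [msqrt, dif_pos h]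
  have hu := (Unitary.mem_iff.mp h.1.eigenvectorUnitary.2).1
  conv_rhs => rw [h.1.spectral_theorem, Unitary.conjStarAlgAut_apply]
  simp only [Matrix.mul_assoc]
  rw [← Matrix.mul_assoc (star _) _ _, hu, Matrix.one_mul, ← Matrix.mul_assoc (diagonal _) (diagonal _),
    diagonal_mul_diagonal]
  congr 3
  funext i
  simp only [Function.comp_apply]
  rw [← Complex.ofReal_mul, Real.mul_self_sqrt (h.eigenvalues_nonneg i)]
  rfl

lemma msqrt_herm {M : Matrix n n ℂ} (h : M.PosSemidef) : (msqrt M)ᴴ = msqrt M :=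
  (msqrt_psd h).1

lemma trace_psd_nonneg {M : Matrix n n ℂ} (h : M.PosSemidef) : 0 ≤ M.trace := by
  rw [Matrix.trace]
  apply Finset.sum_nonneg
  intro i _
  have := h.dotProduct_mulVec_nonneg (Pi.single i 1)
  simpa [dotProduct, Matrix.mulVec, Pi.single_apply, Finset.mul_sum] using this

lemma trace_psd_mul_nonneg {P Q : Matrix n n ℂ} (hP : P.PosSemidef) (hQ : Q.PosSemidef) :
    0 ≤ (P * Q).trace := by
  have h1 : P * Q = P * msqrt Q * msqrt Q := by rw [mul_assoc, msqrt_mul_self hQ]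
  rw [h1, Matrix.trace_mul_cycle]
  have : (msqrt Q * P * msqrt Q).PosSemidef := by
    have := hP.conjTranspose_mul_mul_same (msqrt Q)
    rwa [msqrt_herm hQ] at this
  exact trace_psd_nonneg this

lemma trace_psd_re_nonneg {M : Matrix n n ℂ} (h : M.PosSemidef) : 0 ≤ M.trace.re :=
  (Complex.nonneg_iff.mp (trace_psd_nonneg h)).1

/-- Cauchy-Schwarz for the trace inner product -/
lemma trace_CS (X Y : Matrix n n ℂ) :
    ‖((Xᴴ * Y).trace)‖ ≤
      Real.sqrt ((Xᴴ * X).trace.re) * Real.sqrt ((Yᴴ * Y).trace.re) := by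
  let f : Matrix n n ℂ → EuclideanSpace ℂ (n × n) := fun M => (WithLp.equiv 2 _).symm (fun p => M p.1 p.2)
  have hinner : ∀ M N : Matrix n n ℂ, (inner ℂ (f M) (f N) : ℂ) = (Mᴴ * N).trace := by
    intro M N
    rw [PiLp.inner_apply]
    simp only [RCLike.inner_apply]
    rw [Matrix.trace]
    simp only [Matrix.diag, Matrix.mul_apply, Matrix.conjTranspose_apply]
    rw [Fintype.sum_prod_type, Finset.sum_comm]
    exact Finset.sum_congr rfl fun _ _ => Finset.sum_congr rfl fun _ _ => mul_comm _ _
  have hnorm : ∀ M : Matrix n n ℂ, ‖f M‖ = Real.sqrt ((Mᴴ * M).trace.re) := by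
    intro M
    rw [@norm_eq_sqrt_re_inner ℂ, hinner]
    simp [RCLike.re_to_complex]
  calc ‖((Xᴴ * Y).trace)‖ = ‖(inner ℂ (f X) (f Y) : ℂ)‖ := by rw [hinner]
    _ ≤ ‖f X‖ * ‖f Y‖ := norm_inner_le_norm _ _
    _ = _ := by rw [hnorm, hnorm]

lemma dot_eq_inner (x y : n → ℂ) :
    star x ⬝ᵥ y = (inner ℂ ((WithLp.equiv 2 (n → ℂ)).symm x) ((WithLp.equiv 2 (n → ℂ)).symm y) : ℂ) := by
  rw [PiLp.inner_apply]
  exact Finset.sum_congr rfl fun _ _ => mul_comm _ _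

lemma dot_self_eq_norm_sq (x : n → ℂ) :
    star x ⬝ᵥ x = ((‖(WithLp.equiv 2 (n → ℂ)).symm x‖ : ℝ) : ℂ) ^ 2 := by
  rw [dot_eq_inner]
  exact inner_self_eq_norm_sq_to_K (𝕜 := ℂ) (E := EuclideanSpace ℂ n) ((WithLp.equiv 2 (n → ℂ)).symm x)

lemma norm_mulVec_le {C : Matrix n n ℂ} (h : ((1 : Matrix n n ℂ) - Cᴴ * C).PosSemidef)
    (w : n → ℂ) :
    ‖(WithLp.equiv 2 (n → ℂ)).symm (C *ᵥ w)‖ ≤ ‖(WithLp.equiv 2 (n → ℂ)).symm w‖ := by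
  have h2 := h.dotProduct_mulVec_nonneg w
  have e1 : star w ⬝ᵥ (((1 : Matrix n n ℂ) - Cᴴ * C) *ᵥ w)
      = star w ⬝ᵥ w - star (C *ᵥ w) ⬝ᵥ (C *ᵥ w) := by
    rw [Matrix.sub_mulVec, dotProduct_sub, Matrix.one_mulVec]
    congr 1
    simp only [Matrix.star_mulVec, Matrix.dotProduct_mulVec, Matrix.vecMul_vecMul]
  rw [e1, dot_self_eq_norm_sq, dot_self_eq_norm_sq, ← Complex.ofReal_pow, ← Complex.ofReal_pow, ← Complex.ofReal_sub] at h2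
  have := (Complex.le_def.mp h2).1
  simp only [Complex.ofReal_re, Complex.zero_re] at this
  have h3 : ‖(WithLp.equiv 2 (n → ℂ)).symm (C *ᵥ w)‖ ^ 2 ≤ ‖(WithLp.equiv 2 (n → ℂ)).symm w‖ ^ 2 := by
    linarith
  nlinarith [norm_nonneg ((WithLp.equiv 2 (n → ℂ)).symm (C *ᵥ w)), norm_nonneg ((WithLp.equiv 2 (n → ℂ)).symm w)]

lemma psd_one_sub_mul_conjTranspose {C : Matrix n n ℂ}
    (h : ((1 : Matrix n n ℂ) - Cᴴ * C).PosSemidef) :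
    ((1 : Matrix n n ℂ) - C * Cᴴ).PosSemidef := by
  apply Matrix.PosSemidef.of_dotProduct_mulVec_nonneg
  · exact Matrix.isHermitian_one.sub (Matrix.isHermitian_mul_conjTranspose_self C)
  · intro v
    have e0 : star v ⬝ᵥ (((1 : Matrix n n ℂ) - C * Cᴴ) *ᵥ v)
        = star v ⬝ᵥ v - star (Cᴴ *ᵥ v) ⬝ᵥ (Cᴴ *ᵥ v) := by
      rw [Matrix.sub_mulVec, dotProduct_sub, Matrix.one_mulVec]
      congr 1
      simp only [Matrix.star_mulVec, Matrix.dotProduct_mulVec, Matrix.vecMul_vecMul,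
        Matrix.conjTranspose_conjTranspose]
    set u := Cᴴ *ᵥ v with hu
    set a := ‖(WithLp.equiv 2 (n → ℂ)).symm v‖ with ha
    set b := ‖(WithLp.equiv 2 (n → ℂ)).symm u‖ with hb
    have hb2 : b ^ 2 ≤ a * b := by
      have e1 : star u ⬝ᵥ u = star v ⬝ᵥ (C *ᵥ u) := by
        simp only [hu, Matrix.star_mulVec, Matrix.dotProduct_mulVec, Matrix.vecMul_vecMul,
          Matrix.conjTranspose_conjTranspose]
      have e2 : (star u ⬝ᵥ u).re = b ^ 2 := by
        rw [dot_self_eq_norm_sq, ← Complex.ofReal_pow, Complex.ofReal_re]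
      have e3 : (star v ⬝ᵥ (C *ᵥ u)).re ≤ a * b := by
        rw [dot_eq_inner]
        calc (inner ℂ ((WithLp.equiv 2 (n → ℂ)).symm v) ((WithLp.equiv 2 (n → ℂ)).symm (C *ᵥ u)) : ℂ).re
            ≤ ‖(inner ℂ ((WithLp.equiv 2 (n → ℂ)).symm v) ((WithLp.equiv 2 (n → ℂ)).symm (C *ᵥ u)) : ℂ)‖ :=
              Complex.re_le_norm _
          _ ≤ a * ‖(WithLp.equiv 2 (n → ℂ)).symm (C *ᵥ u)‖ := by
              rw [ha]; exact norm_inner_le_norm _ _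
          _ ≤ a * b := by
              have := norm_mulVec_le h u
              exact mul_le_mul_of_nonneg_left this (norm_nonneg _)
      rw [← e2, e1]; exact e3
    have hba : b ≤ a := by
      rcases eq_or_lt_of_le (norm_nonneg ((WithLp.equiv 2 (n → ℂ)).symm u)) with h0 | h0
      · rw [hb, ← h0, ha]; exact norm_nonneg _
      · nlinarith
    rw [e0, dot_self_eq_norm_sq, dot_self_eq_norm_sq, ← Complex.ofReal_pow, ← Complex.ofReal_pow, ← Complex.ofReal_sub, ← ha, ← hb]
    rw [Complex.zero_le_real]
    nlinarith

lemma trace_contraction {W X : Matrix n n ℂ} (hW : ((1 : Matrix n n ℂ) - Wᴴ * W).PosSemidef)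
    (hX : X.PosSemidef) : ((W * X * Wᴴ).trace).re ≤ (X.trace).re := by
  have e1 : (W * X * Wᴴ).trace = (X * (Wᴴ * W)).trace := by
    rw [Matrix.trace_mul_cycle, Matrix.trace_mul_comm]
  have e2 : 0 ≤ (X * ((1 : Matrix n n ℂ) - Wᴴ * W)).trace := trace_psd_mul_nonneg hX hW
  have e3 : (X * ((1 : Matrix n n ℂ) - Wᴴ * W)).trace = X.trace - (X * (Wᴴ * W)).trace := by
    rw [Matrix.mul_sub, Matrix.mul_one, Matrix.trace_sub]
  rw [e3] at e2
  have := (Complex.le_def.mp e2).1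
  simp only [Complex.sub_re, Complex.zero_re] at this
  rw [e1]
  linarith

set_option maxHeartbeats 2000000 in
lemma exists_contraction (A : Matrix n n ℂ) :
    ∃ W : Matrix n n ℂ, ((1 : Matrix n n ℂ) - Wᴴ * W).PosSemidef ∧
      (W * A).trace = (msqrt (Aᴴ * A)).trace := by
  have hH : (Aᴴ * A).PosSemidef := Matrix.posSemidef_conjTranspose_mul_self A
  set U : Matrix n n ℂ := ↑hH.1.eigenvectorUnitary with hUdef
  set lam : n → ℝ := hH.1.eigenvalues with hlamdef
  have hlam : ∀ i, 0 ≤ lam i := fun i => hH.eigenvalues_nonneg i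
  have hU1 : Uᴴ * U = 1 := by
    rw [← Matrix.star_eq_conjTranspose]
    exact (Unitary.mem_iff.mp hH.1.eigenvectorUnitary.2).1
  have cancel : ∀ X : Matrix n n ℂ, Uᴴ * (U * X) = X := fun X => by
    rw [← Matrix.mul_assoc, hU1, Matrix.one_mul]
  have conj_mul : ∀ M N : Matrix n n ℂ,
      (U * M * Uᴴ) * (U * N * Uᴴ) = U * (M * N) * Uᴴ := by
    intro M N
    simp only [Matrix.mul_assoc, cancel]
  have conj_trace : ∀ M : Matrix n n ℂ, (U * M * Uᴴ).trace = M.trace := by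
    intro M
    rw [Matrix.trace_mul_cycle, hU1, Matrix.one_mul]
  have hspec : Aᴴ * A = U * Matrix.diagonal (fun i => ((lam i : ℝ) : ℂ)) * Uᴴ := by
    rw [← Matrix.star_eq_conjTranspose]
    exact hH.1.spectral_theorem
  set g : n → ℝ := fun i => if lam i = 0 then 0 else (Real.sqrt (lam i))⁻¹ with hgdef
  set B : Matrix n n ℂ := U * Matrix.diagonal (fun i => (g i : ℂ)) * Uᴴ with hBdef
  have hB_herm : Bᴴ = B := by
    rw [hBdef, Matrix.conjTranspose_mul, Matrix.conjTranspose_mul,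
      Matrix.conjTranspose_conjTranspose, Matrix.diagonal_conjTranspose]
    have : star (fun i => (g i : ℂ)) = fun i => (g i : ℂ) := by
      funext i; simp [Complex.conj_ofReal]
    rw [this, Matrix.mul_assoc]
  refine ⟨B * Aᴴ, ?_, ?_⟩
  · -- contraction
    have hC : (A * B)ᴴ * (A * B) = U * Matrix.diagonal (fun i => ((g i * lam i * g i : ℝ) : ℂ)) * Uᴴ := by
      rw [Matrix.conjTranspose_mul, hB_herm]
      calc B * Aᴴ * (A * B) = B * (Aᴴ * A) * B := by
            simp only [Matrix.mul_assoc]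
        _ = U * Matrix.diagonal (fun i => ((g i * lam i * g i : ℝ) : ℂ)) * Uᴴ := by
            rw [hspec, hBdef, conj_mul, conj_mul, Matrix.diagonal_mul_diagonal,
              Matrix.diagonal_mul_diagonal]
            congr 1
            congr 1
            congr 1
            funext i
            push_cast
            ring
    have hpsd : ((1 : Matrix n n ℂ) - (A * B)ᴴ * (A * B)).PosSemidef := by
      have hone : (1 : Matrix n n ℂ) = U * Matrix.diagonal (fun _ => (1 : ℂ)) * Uᴴ := by
        rw [Matrix.diagonal_one, Matrix.mul_one]
        rw [← Matrix.star_eq_conjTranspose]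
        exact ((Unitary.mem_iff.mp hH.1.eigenvectorUnitary.2).2).symm
      rw [hC, hone, ← Matrix.sub_mul, ← Matrix.mul_sub, Matrix.diagonal_sub]
      apply Matrix.PosSemidef.mul_mul_conjTranspose_same
      apply Matrix.PosSemidef.diagonal
      intro i
      simp only [Pi.zero_apply]
      rcases eq_or_lt_of_le (hlam i) with h0 | h0
      · rw [hgdef]
        simp only [← h0, if_pos rfl]
        norm_num
      · have hg : g i = (Real.sqrt (lam i))⁻¹ := by rw [hgdef]; simp [ne_of_gt h0]
        have : g i * lam i * g i = 1 := by
          rw [hg]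
          have hs : Real.sqrt (lam i) * Real.sqrt (lam i) = lam i := Real.mul_self_sqrt (hlam i)
          have hsne : Real.sqrt (lam i) ≠ 0 := by positivity
          field_simp
          rw [Real.sq_sqrt (hlam i)]
        rw [this]
        norm_num
    have hWW : (1 : Matrix n n ℂ) - (B * Aᴴ)ᴴ * (B * Aᴴ) = 1 - (A * B) * (A * B)ᴴ := by
      rw [Matrix.conjTranspose_mul, Matrix.conjTranspose_conjTranspose, hB_herm,
        Matrix.conjTranspose_mul, hB_herm]
    rw [hWW]
    exact psd_one_sub_mul_conjTranspose hpsd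
  · -- trace
    have e1 : (B * Aᴴ * A).trace = ∑ i, ((Real.sqrt (lam i) : ℝ) : ℂ) := by
      rw [Matrix.mul_assoc, hspec, hBdef]
      rw [conj_mul, conj_trace, Matrix.diagonal_mul_diagonal, Matrix.trace_diagonal]
      congr 1
      funext i
      rcases eq_or_lt_of_le (hlam i) with h0 | h0
      · rw [hgdef]
        simp [← h0]
      · have hg : g i = (Real.sqrt (lam i))⁻¹ := by rw [hgdef]; simp [ne_of_gt h0]
        have hs : Real.sqrt (lam i) * Real.sqrt (lam i) = lam i := Real.mul_self_sqrt (hlam i)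
        have hsne : Real.sqrt (lam i) ≠ 0 := by positivity
        simp only [hg]
        rw [show ((lam i : ℝ) : ℂ) = ((Real.sqrt (lam i) * Real.sqrt (lam i) : ℝ) : ℂ) by rw [hs]]
        push_cast
        field_simp
    have e2 : (msqrt (Aᴴ * A)).trace = ∑ i, ((Real.sqrt (lam i) : ℝ) : ℂ) := by
      rw [msqrt, dif_pos hH]
      rw [← Matrix.star_eq_conjTranspose U] at conj_trace
      rw [conj_trace, Matrix.trace_diagonal]
    rw [e1, e2]

lemma fid_le_measured {ρ σ : Matrix n n ℂ} (hρ : ρ.PosSemidef) (hσ : σ.PosSemidef)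
    {P₁ P₂ : Matrix n n ℂ} (h1 : P₁.PosSemidef) (h2 : P₂.PosSemidef) (hsum : P₁ + P₂ = 1) :
    trNorm (msqrt ρ * msqrt σ) ≤
      Real.sqrt (((P₁ * ρ).trace).re) * Real.sqrt (((P₁ * σ).trace).re)
      + Real.sqrt (((P₂ * ρ).trace).re) * Real.sqrt (((P₂ * σ).trace).re) := by
  set R := msqrt ρ with hR
  set S := msqrt σ with hS
  obtain ⟨W, hWc, hWt⟩ := exists_contraction (R * S)
  have hfid : trNorm (R * S) = ((W * (R * S)).trace).re := by
    rw [trNorm, hWt]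
  have bound : ∀ P : Matrix n n ℂ, P.PosSemidef →
      ‖((W * R * P * S).trace)‖ ≤
        Real.sqrt (((P * ρ).trace).re) * Real.sqrt (((P * σ).trace).re) := by
    intro P hP
    set Q := msqrt P with hQ
    have hQH : Qᴴ = Q := msqrt_herm hP
    have hRH : Rᴴ = R := msqrt_herm hρ
    have hSH : Sᴴ = S := msqrt_herm hσ
    have hQQ : Q * Q = P := msqrt_mul_self hP
    have hQRW : (Q * R * Wᴴ)ᴴ = W * (R * Q) := by
      rw [Matrix.conjTranspose_mul, Matrix.conjTranspose_mul,
        Matrix.conjTranspose_conjTranspose, hRH, hQH]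
    have hXY : W * R * P * S = (Q * R * Wᴴ)ᴴ * (Q * S) := by
      rw [hQRW]
      calc W * R * P * S = W * R * (Q * Q) * S := by rw [hQQ]
        _ = W * (R * Q) * (Q * S) := by simp only [Matrix.mul_assoc]
    have hRPR : (R * P * R).PosSemidef := by
      have := hP.conjTranspose_mul_mul_same R
      rwa [hRH] at this
    have htr1 : (R * P * R).trace = (P * ρ).trace := by
      rw [Matrix.trace_mul_cycle, msqrt_mul_self hρ, Matrix.trace_mul_comm]
    have htr2 : (S * P * S).trace = (P * σ).trace := by
      rw [Matrix.trace_mul_cycle, msqrt_mul_self hσ, Matrix.trace_mul_comm]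
    have e1 : (Q * R * Wᴴ)ᴴ * (Q * R * Wᴴ) = W * (R * P * R) * Wᴴ := by
      rw [hQRW]
      calc W * (R * Q) * (Q * R * Wᴴ) = W * (R * (Q * Q) * R) * Wᴴ := by
            simp only [Matrix.mul_assoc]
        _ = W * (R * P * R) * Wᴴ := by rw [hQQ]
    have e2 : (Q * S)ᴴ * (Q * S) = S * P * S := by
      rw [Matrix.conjTranspose_mul, hQH, hSH]
      calc S * Q * (Q * S) = S * (Q * Q) * S := by simp only [Matrix.mul_assoc]
        _ = S * P * S := by rw [hQQ]
    rw [hXY]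
    refine le_trans (trace_CS (Q * R * Wᴴ) (Q * S)) ?_
    have f1 : Real.sqrt ((((Q * R * Wᴴ)ᴴ * (Q * R * Wᴴ)).trace).re)
        ≤ Real.sqrt (((P * ρ).trace).re) := by
      apply Real.sqrt_le_sqrt
      rw [e1, ← htr1]
      exact trace_contraction hWc hRPR
    have f2 : Real.sqrt ((((Q * S)ᴴ * (Q * S)).trace).re) = Real.sqrt (((P * σ).trace).re) := by
      rw [e2, htr2]
    rw [f2]
    exact mul_le_mul_of_nonneg_right f1 (Real.sqrt_nonneg _)
  have expand : W * (R * S) = W * R * P₁ * S + W * R * P₂ * S := by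
    calc W * (R * S) = W * R * (P₁ + P₂) * S := by
          rw [hsum, Matrix.mul_one, Matrix.mul_assoc]
      _ = W * R * P₁ * S + W * R * P₂ * S := by rw [Matrix.mul_add, Matrix.add_mul]
  rw [hfid, expand, Matrix.trace_add, Complex.add_re]
  have b1 := bound P₁ h1
  have b2 := bound P₂ h2
  have r1 : ((W * R * P₁ * S).trace).re ≤ ‖((W * R * P₁ * S).trace)‖ :=
    Complex.re_le_norm _
  have r2 : ((W * R * P₂ * S).trace).re ≤ ‖((W * R * P₂ * S).trace)‖ :=
    Complex.re_le_norm _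
  linarith

lemma classical_bound {t s F : ℝ} (ht0 : 0 ≤ t) (ht1 : t ≤ 1) (hs0 : 0 ≤ s) (hs1 : s ≤ 1)
    (hF0 : 0 ≤ F)
    (hF : F ≤ Real.sqrt t * Real.sqrt s + Real.sqrt (1 - t) * Real.sqrt (1 - s)) :
    (t - s) ^ 2 + F ^ 2 ≤ 1 := by
  set a := Real.sqrt t with ha
  set c := Real.sqrt s with hc
  set b := Real.sqrt (1 - t) with hb
  set d := Real.sqrt (1 - s) with hd
  have ha2 : a ^ 2 = t := Real.sq_sqrt ht0
  have hc2 : c ^ 2 = s := Real.sq_sqrt hs0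
  have hb2 : b ^ 2 = 1 - t := Real.sq_sqrt (by linarith)
  have hd2 : d ^ 2 = 1 - s := Real.sq_sqrt (by linarith)
  have ha0 : 0 ≤ a := Real.sqrt_nonneg _
  have hb0 : 0 ≤ b := Real.sqrt_nonneg _
  have hc0 : 0 ≤ c := Real.sqrt_nonneg _
  have hd0 : 0 ≤ d := Real.sqrt_nonneg _
  have hF2 : F ^ 2 ≤ (a * c + b * d) ^ 2 := by
    apply pow_le_pow_left₀ hF0 hF
  have key : 2 * ((a * c) * (b * d)) ≤ (a * b) ^ 2 + (c * d) ^ 2 := by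
    nlinarith [sq_nonneg (a * b - c * d)]
  nlinarith [sq_nonneg (a * c + b * d), key, hF2, sq_nonneg (a*d - b*c)]

end AuxFvdG

/-- δ(ρ,σ)² + F(ρ,σ)² ≤ 1 for density matrices ρ, σ. -/
theorem traceDist_sq_add_fid_sq_le_one {n : Type*} [Fintype n] [DecidableEq n]
    {ρ σ : Matrix n n ℂ} (hρ : ρ.PosSemidef) (hρ1 : ρ.trace = 1)
    (hσ : σ.PosSemidef) (hσ1 : σ.trace = 1) :
    traceDist ρ σ ^ 2 + Fid ρ σ ^ 2 ≤ 1 := by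
  have hpsd0 : (0 : Matrix n n ℂ).PosSemidef := ⟨Matrix.isHermitian_zero, fun x => by simp⟩
  have hpsd1 : (1 : Matrix n n ℂ).PosSemidef := Matrix.PosDef.one.posSemidef
  have hF0 : 0 ≤ Fid ρ σ := by
    rw [Fid, trNorm]
    exact trace_psd_re_nonneg (msqrt_psd (Matrix.posSemidef_conjTranspose_mul_self _))
  have key : ∀ Υ : Matrix n n ℂ, Υ.PosSemidef → ((1 : Matrix n n ℂ) - Υ).PosSemidef →
      ((Υ * (ρ - σ)).trace).re ^ 2 + Fid ρ σ ^ 2 ≤ 1 := by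
    intro Υ hΥ hΥ1
    set t := ((Υ * ρ).trace).re with ht
    set s := ((Υ * σ).trace).re with hs
    have hexp : ((Υ * (ρ - σ)).trace).re = t - s := by
      rw [Matrix.mul_sub, Matrix.trace_sub, Complex.sub_re]
    have ht0 : 0 ≤ t := (Complex.nonneg_iff.mp (trace_psd_mul_nonneg hΥ hρ)).1
    have hs0 : 0 ≤ s := (Complex.nonneg_iff.mp (trace_psd_mul_nonneg hΥ hσ)).1
    have ht1' : (((((1 : Matrix n n ℂ) - Υ)) * ρ).trace).re = 1 - t := by
      rw [Matrix.sub_mul, Matrix.one_mul, Matrix.trace_sub, Complex.sub_re, hρ1]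
      norm_num
      rfl
    have hs1' : (((((1 : Matrix n n ℂ) - Υ)) * σ).trace).re = 1 - s := by
      rw [Matrix.sub_mul, Matrix.one_mul, Matrix.trace_sub, Complex.sub_re, hσ1]
      norm_num
      rfl
    have ht1 : t ≤ 1 := by
      have := (Complex.nonneg_iff.mp (trace_psd_mul_nonneg hΥ1 hρ)).1
      rw [ht1'] at this; linarith
    have hs1 : s ≤ 1 := by
      have := (Complex.nonneg_iff.mp (trace_psd_mul_nonneg hΥ1 hσ)).1
      rw [hs1'] at this; linarith
    have hsum : Υ + ((1 : Matrix n n ℂ) - Υ) = 1 := by abel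
    have hfid := fid_le_measured hρ hσ hΥ hΥ1 hsum
    rw [ht1', hs1'] at hfid
    rw [hexp]
    exact classical_bound ht0 ht1 hs0 hs1 hF0 hfid
  have hone : ((1 : Matrix n n ℂ) - 0).PosSemidef := by
    rw [sub_zero]; exact hpsd1
  have hF1 : Fid ρ σ ≤ 1 := by
    have h0 := key 0 hpsd0 hone
    simp only [Matrix.zero_mul, Matrix.trace_zero, Complex.zero_re] at h0
    nlinarith
  have h1F : 0 ≤ 1 - Fid ρ σ ^ 2 := by nlinarith
  set SS := { r : ℝ | ∃ Υ : Matrix n n ℂ, Υ.PosSemidef ∧ ((1 : Matrix n n ℂ) - Υ).PosSemidef ∧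
    r = ((Υ * (ρ - σ)).trace).re } with hSS
  have hub : ∀ r ∈ SS, r ≤ Real.sqrt (1 - Fid ρ σ ^ 2) := by
    rintro r ⟨Υ, hΥ, hΥ1, rfl⟩
    have hk := key Υ hΥ hΥ1
    calc ((Υ * (ρ - σ)).trace).re ≤ |((Υ * (ρ - σ)).trace).re| := le_abs_self _
      _ = Real.sqrt (((Υ * (ρ - σ)).trace).re ^ 2) := (Real.sqrt_sq_eq_abs _).symm
      _ ≤ Real.sqrt (1 - Fid ρ σ ^ 2) := Real.sqrt_le_sqrt (by linarith)
  have hmem0 : (0 : ℝ) ∈ SS := ⟨0, hpsd0, hone, by simp⟩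
  have hbdd : BddAbove SS := ⟨Real.sqrt (1 - Fid ρ σ ^ 2), fun r hr => hub r hr⟩
  have hsup_le : traceDist ρ σ ≤ Real.sqrt (1 - Fid ρ σ ^ 2) := by
    rw [traceDist]
    exact csSup_le ⟨0, hmem0⟩ (by exact fun r hr => hub r hr)
  have hsup0 : 0 ≤ traceDist ρ σ := by
    rw [traceDist]
    exact le_csSup hbdd hmem0
  have hsq : traceDist ρ σ ^ 2 ≤ 1 - Fid ρ σ ^ 2 := by
    have := pow_le_pow_left₀ hsup0 hsup_le 2
    rwa [Real.sq_sqrt h1F] at this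
  linarith
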